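/- arXiv:quant-ph/0001071 — 3 statements merged into one kernel-verified Lean document; each statement's English description precedes it below -/
import Mathlib

section
/- Let A and B be elements of a complex Banach algebra (for instance, n × n complex matrices or bounded operators on a finite-dimensional complex Hilbert space). Then the sequence (exp(A/n) · exp(B/n))^n converges in norm to exp(A + B) as n → ∞. -/
open NormedSpace Filter
open Nat

section aux
variable {𝔸 : Type*} [NormedRing 𝔸] [NormedAlgebra ℂ 𝔸] [CompleteSpace 𝔸] [NormOneClass 𝔸]

private theorem trotter_norm_exp_le (x : 𝔸) : ‖exp x‖ ≤ Real.exp ‖x‖ := by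
  rw [exp_eq_tsum ℂ, Real.exp_eq_exp_ℝ, exp_eq_tsum_div]
  refine (norm_tsum_le_tsum_norm (norm_expSeries_summable' x)).trans ?_
  refine Summable.tsum_le_tsum (fun n => ?_) (norm_expSeries_summable' x)
    (Real.summable_pow_div_factorial ‖x‖)
  rw [norm_smul, norm_inv, Complex.norm_natCast, div_eq_inv_mul]
  gcongr
  exact norm_pow_le x n

private theorem trotter_norm_exp_sub (x : 𝔸) : ‖exp x - 1 - x‖ ≤ ‖x‖ ^ 2 * Real.exp ‖x‖ := by
  have hs : Summable fun n : ℕ => ‖((n ! : ℂ))⁻¹ • x ^ n‖ := norm_expSeries_summable' x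
  have key : exp x - 1 - x = ∑' n : ℕ, (((n + 2)! : ℂ))⁻¹ • x ^ (n + 2) := by
    have h2 := Summable.sum_add_tsum_nat_add (f := fun n : ℕ => ((n ! : ℂ))⁻¹ • x ^ n) 2 hs.of_norm
    rw [exp_eq_tsum ℂ]
    beta_reduce
    rw [← h2]
    simp [Finset.sum_range_succ]
    abel
  rw [key]
  have hnorm : Summable fun n : ℕ => ‖(((n + 2)! : ℂ))⁻¹ • x ^ (n + 2)‖ :=
    (summable_nat_add_iff 2).mpr hs
  refine (norm_tsum_le_tsum_norm hnorm).trans ?_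
  have hrhs : Summable fun n : ℕ => ‖x‖ ^ 2 * (‖x‖ ^ n / n !) :=
    (Real.summable_pow_div_factorial ‖x‖).mul_left _
  refine le_trans (Summable.tsum_le_tsum (fun n => ?_) hnorm hrhs) ?_
  · rw [norm_smul, norm_inv, Complex.norm_natCast]
    calc ((n + 2)! : ℝ)⁻¹ * ‖x ^ (n + 2)‖ ≤ ((n + 2)! : ℝ)⁻¹ * ‖x‖ ^ (n + 2) := by
          exact mul_le_mul_of_nonneg_left (norm_pow_le x _) (by positivity)
      _ = ‖x‖ ^ 2 * (‖x‖ ^ n * ((n + 2)! : ℝ)⁻¹) := by ring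
      _ ≤ ‖x‖ ^ 2 * (‖x‖ ^ n / n !) := by
          rw [div_eq_mul_inv]
          gcongr
          exact Nat.le_add_right n 2
  · rw [tsum_mul_left, Real.exp_eq_exp_ℝ, exp_eq_tsum_div]

private theorem trotter_pow_sub_pow {𝔸 : Type*} [NormedRing 𝔸] [NormOneClass 𝔸] (T S : 𝔸) (M : ℝ)
    (hM : 1 ≤ M) (hT : ‖T‖ ≤ M) (hS : ‖S‖ ≤ M) (n : ℕ) :
    ‖T ^ n - S ^ n‖ ≤ n * M ^ n * ‖T - S‖ := by
  have hM0 : (0:ℝ) ≤ M := le_trans zero_le_one hM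
  induction n with
  | zero => simp
  | succ n ih =>
    have key : T ^ (n + 1) - S ^ (n + 1) = T ^ n * (T - S) + (T ^ n - S ^ n) * S := by
      noncomm_ring
    have hTn : ‖T ^ n‖ ≤ M ^ n :=
      (norm_pow_le T n).trans (pow_le_pow_left₀ (norm_nonneg T) hT n)
    calc ‖T ^ (n + 1) - S ^ (n + 1)‖ ≤ ‖T ^ n‖ * ‖T - S‖ + ‖T ^ n - S ^ n‖ * ‖S‖ := by
          rw [key]
          exact (norm_add_le _ _).trans (add_le_add (norm_mul_le _ _) (norm_mul_le _ _))
      _ ≤ M ^ n * ‖T - S‖ + (n * M ^ n * ‖T - S‖) * M := by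
          gcongr
      _ ≤ (n + 1 : ℕ) * M ^ (n + 1) * ‖T - S‖ := by
          push_cast
          rw [pow_succ]
          have key2 : M ^ n * ‖T - S‖ ≤ M ^ n * M * ‖T - S‖ := by
            nlinarith [mul_nonneg (mul_nonneg (sub_nonneg.2 hM) (pow_nonneg hM0 n)) (norm_nonneg (T - S))]
          nlinarith [Nat.cast_nonneg (α := ℝ) n, pow_nonneg hM0 n, norm_nonneg (T - S)]

private theorem trotter_core (A B : 𝔸) :
    Tendsto (fun n : ℕ => (exp ((n : ℂ)⁻¹ • A) * exp ((n : ℂ)⁻¹ • B)) ^ n)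
      atTop (nhds (exp (A + B))) := by
  set a := ‖A‖ with ha
  set b := ‖B‖ with hb
  have ha0 : 0 ≤ a := norm_nonneg A
  have hb0 : 0 ≤ b := norm_nonneg B
  set C : ℝ := a * b + (1 + a) * (b ^ 2 * Real.exp b) + a ^ 2 * Real.exp a * Real.exp b
      + (a + b) ^ 2 * Real.exp (a + b) with hC
  have hC0 : 0 ≤ C := by positivity
  set K : ℝ := Real.exp (a + b) * C with hK
  rw [← tendsto_sub_nhds_zero_iff]
  apply squeeze_zero_norm' (a := fun n : ℕ => K * (n : ℝ)⁻¹)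
  · filter_upwards [eventually_ge_atTop 1] with n hn
    have hn0 : (0:ℝ) < n := by exact_mod_cast hn
    set ε : ℝ := (n : ℝ)⁻¹ with hε
    have hε0 : 0 < ε := by positivity
    have hε1 : ε ≤ 1 := by
      rw [hε, inv_le_one_iff₀]; right; exact_mod_cast hn
    set x : 𝔸 := (n : ℂ)⁻¹ • A with hxdef
    set y : 𝔸 := (n : ℂ)⁻¹ • B with hydef
    have hnc : ‖((n : ℂ))⁻¹‖ = ε := by
      rw [norm_inv, Complex.norm_natCast]
    have hx : ‖x‖ = ε * a := by rw [hxdef, norm_smul, hnc]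
    have hy : ‖y‖ = ε * b := by rw [hydef, norm_smul, hnc]
    have hxy : ‖x + y‖ ≤ ε * (a + b) := by
      refine (norm_add_le x y).trans ?_
      rw [hx, hy]; ring_nf; rfl
    have hxa : ‖x‖ ≤ a := by rw [hx]; exact mul_le_of_le_one_left ha0 hε1
    have hyb : ‖y‖ ≤ b := by rw [hy]; exact mul_le_of_le_one_left hb0 hε1
    have hxyab : ‖x + y‖ ≤ a + b := hxy.trans (mul_le_of_le_one_left (by positivity) hε1)
    set T : 𝔸 := exp x * exp y with hT
    set S : 𝔸 := exp (x + y) with hS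
    -- S ^ n = exp (A + B)
    have hxyAB : x + y = (n : ℂ)⁻¹ • (A + B) := by rw [hxdef, hydef, smul_add]
    have hSpow : S ^ n = exp (A + B) := by
      letI : NormedAlgebra ℚ 𝔸 := .restrictScalars ℚ ℂ 𝔸
      rw [hS, ← exp_nsmul, hxyAB, ← Nat.cast_smul_eq_nsmul ℂ, smul_smul,
        mul_inv_cancel₀ (by exact_mod_cast hn0.ne' : (n : ℂ) ≠ 0), one_smul]
    -- bound on ‖T - S‖
    have hdiff : ‖T - S‖ ≤ ε ^ 2 * C := by
      have expand : T - S = x * y + (1 + x) * (exp y - 1 - y)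
          + (exp x - 1 - x) * exp y - (exp (x + y) - 1 - (x + y)) := by
        rw [hT, hS]; noncomm_ring
      have h1 : ‖x * y‖ ≤ ε ^ 2 * (a * b) := by
        refine (norm_mul_le x y).trans ?_
        rw [hx, hy]; ring_nf; rfl
      have h2 : ‖(1 + x) * (exp y - 1 - y)‖ ≤ ε ^ 2 * ((1 + a) * (b ^ 2 * Real.exp b)) := by
        refine (norm_mul_le _ _).trans ?_
        have e1 : ‖(1 : 𝔸) + x‖ ≤ 1 + a := by
          refine (norm_add_le _ _).trans ?_
          rw [norm_one]; linarith
        have e2 : ‖exp y - 1 - y‖ ≤ (ε * b) ^ 2 * Real.exp b := by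
          refine (trotter_norm_exp_sub y).trans ?_
          rw [hy]; gcongr
          exact mul_le_of_le_one_left hb0 hε1
        calc ‖(1 : 𝔸) + x‖ * ‖exp y - 1 - y‖ ≤ (1 + a) * ((ε * b) ^ 2 * Real.exp b) := by
              refine mul_le_mul e1 e2 (norm_nonneg _) (by positivity)
          _ = ε ^ 2 * ((1 + a) * (b ^ 2 * Real.exp b)) := by ring
      have h3 : ‖(exp x - 1 - x) * exp y‖ ≤ ε ^ 2 * (a ^ 2 * Real.exp a * Real.exp b) := by
        refine (norm_mul_le _ _).trans ?_
        have e1 : ‖exp x - 1 - x‖ ≤ (ε * a) ^ 2 * Real.exp a := by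
          refine (trotter_norm_exp_sub x).trans ?_
          rw [hx]; gcongr
          exact mul_le_of_le_one_left ha0 hε1
        have e2 : ‖exp y‖ ≤ Real.exp b :=
          (trotter_norm_exp_le y).trans (Real.exp_le_exp.2 hyb)
        calc ‖exp x - 1 - x‖ * ‖exp y‖ ≤ ((ε * a) ^ 2 * Real.exp a) * Real.exp b := by
              refine mul_le_mul e1 e2 (norm_nonneg _) (by positivity)
          _ = ε ^ 2 * (a ^ 2 * Real.exp a * Real.exp b) := by ring
      have h4 : ‖exp (x + y) - 1 - (x + y)‖ ≤ ε ^ 2 * ((a + b) ^ 2 * Real.exp (a + b)) := by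
        refine (trotter_norm_exp_sub (x + y)).trans ?_
        calc ‖x + y‖ ^ 2 * Real.exp ‖x + y‖ ≤ (ε * (a + b)) ^ 2 * Real.exp (a + b) := by
              gcongr <;> first
                | exact norm_nonneg _
                | exact hxy
                | exact hxyab
          _ = ε ^ 2 * ((a + b) ^ 2 * Real.exp (a + b)) := by ring
      calc ‖T - S‖ ≤ ‖x * y + (1 + x) * (exp y - 1 - y) + (exp x - 1 - x) * exp y‖
            + ‖exp (x + y) - 1 - (x + y)‖ := by rw [expand]; exact norm_sub_le _ _
        _ ≤ ‖x * y + (1 + x) * (exp y - 1 - y)‖ + ‖(exp x - 1 - x) * exp y‖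
            + ‖exp (x + y) - 1 - (x + y)‖ := by gcongr; exact norm_add_le _ _
        _ ≤ ‖x * y‖ + ‖(1 + x) * (exp y - 1 - y)‖ + ‖(exp x - 1 - x) * exp y‖
            + ‖exp (x + y) - 1 - (x + y)‖ := by gcongr; exact norm_add_le _ _
        _ ≤ ε ^ 2 * (a * b) + ε ^ 2 * ((1 + a) * (b ^ 2 * Real.exp b))
            + ε ^ 2 * (a ^ 2 * Real.exp a * Real.exp b)
            + ε ^ 2 * ((a + b) ^ 2 * Real.exp (a + b)) := by
              exact add_le_add (add_le_add (add_le_add h1 h2) h3) h4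
        _ = ε ^ 2 * C := by rw [hC]; ring
    -- norm bounds on T and S
    set M : ℝ := Real.exp (ε * (a + b)) with hM
    have hM1 : 1 ≤ M := Real.one_le_exp (by positivity)
    have hTM : ‖T‖ ≤ M := by
      refine (norm_mul_le _ _).trans ?_
      calc ‖exp x‖ * ‖exp y‖ ≤ Real.exp ‖x‖ * Real.exp ‖y‖ := by
            refine mul_le_mul (trotter_norm_exp_le x) (trotter_norm_exp_le y)
              (norm_nonneg _) (Real.exp_nonneg _)
        _ = Real.exp (‖x‖ + ‖y‖) := (Real.exp_add _ _).symm
        _ ≤ M := by rw [hM]; apply Real.exp_le_exp.2; rw [hx, hy]; ring_nf; rfl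
    have hSM : ‖S‖ ≤ M := by
      refine (trotter_norm_exp_le _).trans ?_
      exact Real.exp_le_exp.2 hxy
    have hMn : M ^ n = Real.exp (a + b) := by
      rw [hM, ← Real.exp_nat_mul]
      congr 1
      rw [hε, ← mul_assoc, mul_inv_cancel₀ hn0.ne', one_mul]
    -- conclude
    calc ‖T ^ n - exp (A + B)‖ = ‖T ^ n - S ^ n‖ := by rw [hSpow]
      _ ≤ n * M ^ n * ‖T - S‖ := trotter_pow_sub_pow T S M hM1 hTM hSM n
      _ ≤ n * M ^ n * (ε ^ 2 * C) := by
          gcongr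
      _ = K * ε := by
          have h5 : (n:ℝ) * ε ^ 2 = ε := by
            rw [hε, sq, ← mul_assoc, mul_inv_cancel₀ hn0.ne', one_mul]
          rw [hMn, hK]
          calc (n:ℝ) * Real.exp (a + b) * (ε ^ 2 * C)
              = Real.exp (a + b) * C * ((n:ℝ) * ε ^ 2) := by ring
            _ = Real.exp (a + b) * C * ε := by rw [h5]
  · have : Tendsto (fun n : ℕ => ((n : ℝ))⁻¹) atTop (nhds 0) := tendsto_inv_atTop_zero.comp tendsto_natCast_atTop_atTop
    simpa only [norm_zero, zero_mul, mul_zero] using this.const_mul K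


end aux

/-- **Lie–Trotter product formula.** For elements `A`, `B` of a complex Banach
algebra, the sequence `(exp(A/n) * exp(B/n))^n` converges in norm to
`exp (A + B)` as `n → ∞`. -/
theorem trotter_product_formula {𝔸 : Type*} [NormedRing 𝔸] [NormedAlgebra ℂ 𝔸]
    [CompleteSpace 𝔸] (A B : 𝔸) :
    Tendsto (fun n : ℕ => (exp ((n : ℂ)⁻¹ • A) * exp ((n : ℂ)⁻¹ • B)) ^ n)
      atTop (nhds (exp (A + B))) := by
  rcases subsingleton_or_nontrivial 𝔸 with h | h
  · exact tendsto_const_nhds.congr fun n => Subsingleton.elim _ _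
  · -- embed into continuous linear maps via left multiplication to get `‖1‖ = 1`
    set L : 𝔸 →+* (𝔸 →L[ℂ] 𝔸) :=
      { toFun := fun a => ContinuousLinearMap.mul ℂ 𝔸 a
        map_one' := by ext z; simp
        map_mul' := fun a b => by ext z; simp [mul_assoc]
        map_zero' := by ext z; simp
        map_add' := fun a b => by ext z; simp [add_mul] } with hLdef
    have hL : Continuous L := (ContinuousLinearMap.mul ℂ 𝔸).continuous
    have hsmul : ∀ (c : ℂ) (z : 𝔸), L (c • z) = c • L z := fun c z =>
      map_smul (ContinuousLinearMap.mul ℂ 𝔸) c z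
    have hcore := trotter_core (L A) (L B)
    letI : NormedAlgebra ℚ 𝔸 := .restrictScalars ℚ ℂ 𝔸
    have key : ∀ n : ℕ,
        (exp ((n : ℂ)⁻¹ • L A) * exp ((n : ℂ)⁻¹ • L B)) ^ n
          = L ((exp ((n : ℂ)⁻¹ • A) * exp ((n : ℂ)⁻¹ • B)) ^ n) := fun n => by
      rw [map_pow, map_mul, map_exp L hL, map_exp L hL, hsmul, hsmul]
    have hlim : exp (L A + L B) = L (exp (A + B)) := by
      rw [← map_add, map_exp L hL]
    rw [funext key, hlim] at hcore
    set l : 𝔸 := exp (A + B) with hl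
    set u : ℕ → 𝔸 := fun n => (exp ((n : ℂ)⁻¹ • A) * exp ((n : ℂ)⁻¹ • B)) ^ n with hu
    rw [← tendsto_sub_nhds_zero_iff] at hcore ⊢
    have hnorm : ∀ n : ℕ, ‖u n - l‖ ≤ ‖L (u n) - L l‖ * ‖(1 : 𝔸)‖ := fun n => by
      have h1 : (L (u n) - L l) 1 = u n - l := by
        simp [hLdef]
      calc ‖u n - l‖ = ‖(L (u n) - L l) 1‖ := by rw [h1]
        _ ≤ ‖L (u n) - L l‖ * ‖(1 : 𝔸)‖ := ContinuousLinearMap.le_opNorm _ 1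
    refine squeeze_zero_norm hnorm ?_
    have := (hcore.norm).mul_const ‖(1 : 𝔸)‖
    simpa only [norm_zero, zero_mul] using this
end

section
/- Let A and B be elements of a complex Banach algebra and let n ≥ 1 be a natural number. Then ‖(exp(A/n) · exp(B/n))^n − exp(A + B)‖ ≤ (‖A‖ + ‖B‖)² · exp(2(‖A‖ + ‖B‖)) / n. In particular the Trotter approximation error for the product formula is O(1/n). -/
open NormedSpace

section TrotterAux

open Nat
set_option maxHeartbeats 1000000

variable {𝔸 : Type*} [NormedRing 𝔸] [NormedAlgebra ℂ 𝔸] [CompleteSpace 𝔸]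

private lemma real_exp_tsum (t : ℝ) : Real.exp t = ∑' n : ℕ, t ^ n / n ! := by
  rw [Real.exp_eq_exp_ℝ, exp_eq_tsum_div]

private lemma exp_split1 (X : 𝔸) :
    exp X = 1 + ∑' n : ℕ, (((n + 1)! : ℂ))⁻¹ • X ^ (n + 1) := by
  have hs : Summable (fun n : ℕ => ((n ! : ℂ))⁻¹ • X ^ n) := expSeries_summable' X
  rw [exp_eq_tsum (𝕂 := ℂ)]
  show (∑' n : ℕ, ((n ! : ℂ))⁻¹ • X ^ n) = _
  rw [Summable.tsum_eq_zero_add hs]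
  norm_num

private lemma exp_split2 (X : 𝔸) :
    exp X = 1 + X + ∑' n : ℕ, (((n + 2)! : ℂ))⁻¹ • X ^ (n + 2) := by
  have hs : Summable (fun n : ℕ => ((n ! : ℂ))⁻¹ • X ^ n) := expSeries_summable' X
  have hs1 : Summable (fun n : ℕ => (((n + 1)! : ℂ))⁻¹ • X ^ (n + 1)) :=
    (summable_nat_add_iff 1).mpr hs
  rw [exp_eq_tsum (𝕂 := ℂ)]
  show (∑' n : ℕ, ((n ! : ℂ))⁻¹ • X ^ n) = _
  rw [Summable.tsum_eq_zero_add hs, Summable.tsum_eq_zero_add hs1]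
  norm_num
  exact (add_assoc 1 X _).symm

private lemma term_norm_le (X : 𝔸) (k : ℕ) (hk : 0 < k) :
    ‖((k ! : ℂ))⁻¹ • X ^ k‖ ≤ ‖X‖ ^ k / k ! := by
  rw [norm_smul, norm_inv, Complex.norm_natCast, inv_mul_eq_div]
  gcongr
  exact norm_pow_le' X hk

private lemma tail1_norm (X : 𝔸) : ‖exp X - 1‖ ≤ ‖X‖ * Real.exp ‖X‖ := by
  have hs : Summable (fun n : ℕ => ‖(((n + 1)! : ℂ))⁻¹ • X ^ (n + 1)‖) :=
    (summable_nat_add_iff 1).mpr (norm_expSeries_summable' X)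
  have hg : Summable (fun n : ℕ => ‖X‖ * (‖X‖ ^ n / n !)) :=
    (Real.summable_pow_div_factorial ‖X‖).mul_left _
  have key : ∀ n : ℕ, ‖(((n + 1)! : ℂ))⁻¹ • X ^ (n + 1)‖ ≤ ‖X‖ * (‖X‖ ^ n / n !) := by
    intro n
    refine (term_norm_le X (n + 1) n.succ_pos).trans ?_
    rw [pow_succ, mul_comm (‖X‖ ^ n), mul_div_assoc]
    gcongr
    omega
  calc ‖exp X - 1‖ = ‖∑' n : ℕ, (((n + 1)! : ℂ))⁻¹ • X ^ (n + 1)‖ := by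
        rw [exp_split1 X]; congr 1; abel
    _ ≤ ∑' n : ℕ, ‖(((n + 1)! : ℂ))⁻¹ • X ^ (n + 1)‖ := norm_tsum_le_tsum_norm hs
    _ ≤ ∑' n : ℕ, ‖X‖ * (‖X‖ ^ n / n !) := Summable.tsum_le_tsum key hs hg
    _ = ‖X‖ * Real.exp ‖X‖ := by rw [tsum_mul_left, real_exp_tsum]

private lemma tail2_norm (X : 𝔸) :
    ‖exp X - 1 - X‖ ≤ ‖X‖ ^ 2 / 2 * Real.exp ‖X‖ := by
  have hs : Summable (fun n : ℕ => ‖(((n + 2)! : ℂ))⁻¹ • X ^ (n + 2)‖) :=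
    (summable_nat_add_iff 2).mpr (norm_expSeries_summable' X)
  have hg : Summable (fun n : ℕ => ‖X‖ ^ 2 / 2 * (‖X‖ ^ n / n !)) :=
    (Real.summable_pow_div_factorial ‖X‖).mul_left _
  have key : ∀ n : ℕ, ‖(((n + 2)! : ℂ))⁻¹ • X ^ (n + 2)‖ ≤ ‖X‖ ^ 2 / 2 * (‖X‖ ^ n / n !) := by
    intro n
    refine (term_norm_le X (n + 2) (Nat.succ_pos _)).trans ?_
    have h2 : ((2 * n ! : ℕ) : ℝ) ≤ (((n + 2)! : ℕ) : ℝ) := by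
      exact_mod_cast Nat.mul_le_mul (by omega) (Nat.factorial_le (by omega) :
        n ! ≤ (n + 1)!) |>.trans_eq (Nat.factorial_succ (n + 1)).symm
    calc ‖X‖ ^ (n + 2) / ((n + 2)! : ℝ) ≤ ‖X‖ ^ (n + 2) / ((2 * n ! : ℕ) : ℝ) := by
          gcongr
      _ = ‖X‖ ^ 2 / 2 * (‖X‖ ^ n / n !) := by push_cast; rw [pow_add]; ring
  calc ‖exp X - 1 - X‖ = ‖∑' n : ℕ, (((n + 2)! : ℂ))⁻¹ • X ^ (n + 2)‖ := by
        rw [exp_split2 X]; congr 1; abel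
    _ ≤ ∑' n : ℕ, ‖(((n + 2)! : ℂ))⁻¹ • X ^ (n + 2)‖ := norm_tsum_le_tsum_norm hs
    _ ≤ ∑' n : ℕ, ‖X‖ ^ 2 / 2 * (‖X‖ ^ n / n !) := Summable.tsum_le_tsum key hs hg
    _ = ‖X‖ ^ 2 / 2 * Real.exp ‖X‖ := by rw [tsum_mul_left, real_exp_tsum]

private lemma one_add_mul_exp_le {s : ℝ} (hs : 0 ≤ s) :
    1 + s * Real.exp s ≤ Real.exp (2 * s) := by
  have h1 : (1 : ℝ) ≤ Real.exp s := Real.one_le_exp hs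
  have h2 : s + 1 ≤ Real.exp s := Real.add_one_le_exp s
  have h3 : (0 : ℝ) < Real.exp s := Real.exp_pos s
  have h4 : Real.exp (2 * s) = Real.exp s * Real.exp s := by
    rw [← Real.exp_add]; ring_nf
  nlinarith

private lemma mul_exp_norm_le (x w : 𝔸) :
    ‖w * exp x‖ ≤ Real.exp (2 * ‖x‖) * ‖w‖ := by
  have hd : w * exp x = w + w * (exp x - 1) := by noncomm_ring
  calc ‖w * exp x‖ ≤ ‖w‖ + ‖w * (exp x - 1)‖ := by rw [hd]; exact norm_add_le _ _
    _ ≤ ‖w‖ + ‖w‖ * ‖exp x - 1‖ := by gcongr; exact norm_mul_le _ _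
    _ ≤ ‖w‖ + ‖w‖ * (‖x‖ * Real.exp ‖x‖) := by gcongr; exact tail1_norm x
    _ = (1 + ‖x‖ * Real.exp ‖x‖) * ‖w‖ := by ring
    _ ≤ Real.exp (2 * ‖x‖) * ‖w‖ := by gcongr; exact one_add_mul_exp_le (norm_nonneg x)

private lemma exp_mul_norm_le (x w : 𝔸) :
    ‖exp x * w‖ ≤ Real.exp (2 * ‖x‖) * ‖w‖ := by
  have hd : exp x * w = w + (exp x - 1) * w := by noncomm_ring
  calc ‖exp x * w‖ ≤ ‖w‖ + ‖(exp x - 1) * w‖ := by rw [hd]; exact norm_add_le _ _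
    _ ≤ ‖w‖ + ‖exp x - 1‖ * ‖w‖ := by gcongr; exact norm_mul_le _ _
    _ ≤ ‖w‖ + ‖x‖ * Real.exp ‖x‖ * ‖w‖ := by gcongr; exact tail1_norm x
    _ = (1 + ‖x‖ * Real.exp ‖x‖) * ‖w‖ := by ring
    _ ≤ Real.exp (2 * ‖x‖) * ‖w‖ := by gcongr; exact one_add_mul_exp_le (norm_nonneg x)

private lemma pow_sub_pow_norm (T S : 𝔸) (M : ℝ) (hM : 0 ≤ M)
    (hT : ∀ w : 𝔸, ‖T * w‖ ≤ M * ‖w‖) (hS : ∀ w : 𝔸, ‖w * S‖ ≤ M * ‖w‖) :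
    ∀ k : ℕ, ‖T ^ (k + 1) - S ^ (k + 1)‖ ≤ (k + 1) * M ^ k * ‖T - S‖ := by
  have hSpow : ∀ (w : 𝔸) (j : ℕ), ‖w * S ^ j‖ ≤ M ^ j * ‖w‖ := by
    intro w j
    induction j with
    | zero => simp
    | succ j ih =>
      calc ‖w * S ^ (j + 1)‖ = ‖(w * S ^ j) * S‖ := by rw [pow_succ, ← mul_assoc]
        _ ≤ M * ‖w * S ^ j‖ := hS _
        _ ≤ M * (M ^ j * ‖w‖) := by gcongr
        _ = M ^ (j + 1) * ‖w‖ := by rw [pow_succ]; ring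
  intro k
  induction k with
  | zero => simp
  | succ k ih =>
    have hdec : T ^ (k + 2) - S ^ (k + 2)
        = T * (T ^ (k + 1) - S ^ (k + 1)) + (T - S) * S ^ (k + 1) := by
      rw [pow_succ' T (k + 1), pow_succ' S (k + 1)]
      noncomm_ring
    calc ‖T ^ (k + 2) - S ^ (k + 2)‖
        ≤ ‖T * (T ^ (k + 1) - S ^ (k + 1))‖ + ‖(T - S) * S ^ (k + 1)‖ := by
          rw [hdec]; exact norm_add_le _ _
      _ ≤ M * ((k + 1) * M ^ k * ‖T - S‖) + M ^ (k + 1) * ‖T - S‖ := by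
          refine add_le_add ((hT _).trans ?_) ?_
          · gcongr
          · calc ‖(T - S) * S ^ (k + 1)‖ = ‖(T - S) * S ^ (k + 1)‖ := rfl
              _ ≤ M ^ (k + 1) * ‖T - S‖ := hSpow _ _
      _ = ((k + 1 : ℕ) + 1) * M ^ (k + 1) * ‖T - S‖ := by push_cast; rw [pow_succ]; ring


end TrotterAux

open Nat in
/-- **Quantitative Trotter bound.** For elements `A`, `B` of a complex Banach
algebra and `n ≥ 1`,
`‖(exp(A/n)·exp(B/n))^n − exp(A+B)‖ ≤ (‖A‖+‖B‖)² · exp(2(‖A‖+‖B‖)) / n`,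
so the Trotter product-formula error is `O(1/n)`. -/
theorem trotter_error_bound {𝔸 : Type*} [NormedRing 𝔸] [NormedAlgebra ℂ 𝔸]
    [CompleteSpace 𝔸] (A B : 𝔸) (n : ℕ) (hn : 1 ≤ n) :
    ‖(exp ((n : ℂ)⁻¹ • A) * exp ((n : ℂ)⁻¹ • B)) ^ n - exp (A + B)‖ ≤
      (‖A‖ + ‖B‖) ^ 2 * Real.exp (2 * (‖A‖ + ‖B‖)) / n := by
  obtain ⟨m, rfl⟩ : ∃ m, n = m + 1 := ⟨n - 1, by omega⟩
  have hnc : ((m + 1 : ℕ) : ℂ) ≠ 0 := Nat.cast_ne_zero.mpr (by omega)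
  have hnr : (0 : ℝ) < ((m + 1 : ℕ) : ℝ) := by positivity
  set X := ((m + 1 : ℕ) : ℂ)⁻¹ • A with hXdef
  set Y := ((m + 1 : ℕ) : ℂ)⁻¹ • B with hYdef
  set r := ‖A‖ + ‖B‖ with hrdef
  have hr : 0 ≤ r := by positivity
  set t := r / ((m + 1 : ℕ) : ℝ) with htdef
  have ht0 : 0 ≤ t := by positivity
  have ha : ‖X‖ = ‖A‖ / ((m + 1 : ℕ) : ℝ) := by
    rw [hXdef, norm_smul, norm_inv, Complex.norm_natCast, inv_mul_eq_div]
  have hb : ‖Y‖ = ‖B‖ / ((m + 1 : ℕ) : ℝ) := by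
    rw [hYdef, norm_smul, norm_inv, Complex.norm_natCast, inv_mul_eq_div]
  have hab : ‖X‖ + ‖Y‖ = t := by rw [ha, hb, htdef, hrdef, ← add_div]
  have haX : 0 ≤ ‖X‖ := norm_nonneg _
  have haY : 0 ≤ ‖Y‖ := norm_nonneg _
  have hXY : ‖X + Y‖ ≤ t := hab ▸ norm_add_le X Y
  set T := exp X * exp Y with hTdef
  set S := exp (X + Y) with hSdef
  set M := Real.exp (2 * t) with hMdef
  have hM0 : (0 : ℝ) ≤ M := (Real.exp_pos _).le
  have hexpX : Real.exp ‖X‖ ≤ M := by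
    rw [hMdef]; exact Real.exp_le_exp.mpr (by linarith)
  have hexpY : Real.exp ‖Y‖ ≤ M := by
    rw [hMdef]; exact Real.exp_le_exp.mpr (by linarith)
  have hTm : ∀ w : 𝔸, ‖T * w‖ ≤ M * ‖w‖ := by
    intro w
    have h2ab : 2 * ‖X‖ + 2 * ‖Y‖ = 2 * t := by linarith
    calc ‖exp X * exp Y * w‖ = ‖exp X * (exp Y * w)‖ := by rw [mul_assoc]
      _ ≤ Real.exp (2 * ‖X‖) * ‖exp Y * w‖ := exp_mul_norm_le X _
      _ ≤ Real.exp (2 * ‖X‖) * (Real.exp (2 * ‖Y‖) * ‖w‖) :=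
          mul_le_mul_of_nonneg_left (exp_mul_norm_le Y w) (Real.exp_pos _).le
      _ = (Real.exp (2 * ‖X‖) * Real.exp (2 * ‖Y‖)) * ‖w‖ := by ring
      _ = M * ‖w‖ := by rw [hMdef, ← Real.exp_add, h2ab]
  have hSm : ∀ w : 𝔸, ‖w * S‖ ≤ M * ‖w‖ := by
    intro w
    refine (mul_exp_norm_le (X + Y) w).trans
      (mul_le_mul_of_nonneg_right ?_ (norm_nonneg w))
    rw [hMdef]
    exact Real.exp_le_exp.mpr (by linarith)
  -- bound on ‖T - S‖
  have hD : ‖T - S‖ ≤ t ^ 2 * M := by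
    have hdec : T - S = (exp X - 1 - X) * exp Y + X * (exp Y - 1)
        + (exp Y - 1 - Y) - (exp (X + Y) - 1 - (X + Y)) := by
      rw [hTdef, hSdef]; noncomm_ring
    have h1 : ‖(exp X - 1 - X) * exp Y‖ ≤ ‖X‖ ^ 2 / 2 * M := by
      have e1 : Real.exp (2 * ‖Y‖) * Real.exp ‖X‖ ≤ M := by
        rw [hMdef, ← Real.exp_add]
        exact Real.exp_le_exp.mpr (by linarith)
      calc ‖(exp X - 1 - X) * exp Y‖
          ≤ Real.exp (2 * ‖Y‖) * ‖exp X - 1 - X‖ := mul_exp_norm_le Y _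
        _ ≤ Real.exp (2 * ‖Y‖) * (‖X‖ ^ 2 / 2 * Real.exp ‖X‖) :=
            mul_le_mul_of_nonneg_left (tail2_norm X) (Real.exp_pos _).le
        _ = ‖X‖ ^ 2 / 2 * (Real.exp (2 * ‖Y‖) * Real.exp ‖X‖) := by ring
        _ ≤ ‖X‖ ^ 2 / 2 * M := mul_le_mul_of_nonneg_left e1 (by positivity)
    have h2 : ‖X * (exp Y - 1)‖ ≤ ‖X‖ * ‖Y‖ * M := by
      calc ‖X * (exp Y - 1)‖ ≤ ‖X‖ * ‖exp Y - 1‖ := norm_mul_le _ _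
        _ ≤ ‖X‖ * (‖Y‖ * Real.exp ‖Y‖) :=
            mul_le_mul_of_nonneg_left (tail1_norm Y) haX
        _ ≤ ‖X‖ * (‖Y‖ * M) :=
            mul_le_mul_of_nonneg_left (mul_le_mul_of_nonneg_left hexpY haY) haX
        _ = ‖X‖ * ‖Y‖ * M := by ring
    have h3 : ‖exp Y - 1 - Y‖ ≤ ‖Y‖ ^ 2 / 2 * M :=
      (tail2_norm Y).trans (mul_le_mul_of_nonneg_left hexpY (by positivity))
    have h4 : ‖exp (X + Y) - 1 - (X + Y)‖ ≤ t ^ 2 / 2 * M := by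
      have e1 : ‖X + Y‖ ^ 2 / 2 ≤ t ^ 2 / 2 := by
        nlinarith [norm_nonneg (X + Y)]
      have e2 : Real.exp ‖X + Y‖ ≤ M := by
        rw [hMdef]
        exact Real.exp_le_exp.mpr (by linarith [norm_nonneg (X + Y)])
      exact (tail2_norm (X + Y)).trans
        (mul_le_mul e1 e2 (Real.exp_pos _).le (by positivity))
    calc ‖T - S‖ ≤ ‖(exp X - 1 - X) * exp Y + X * (exp Y - 1)
          + (exp Y - 1 - Y)‖ + ‖exp (X + Y) - 1 - (X + Y)‖ := by
          rw [hdec]; exact norm_sub_le _ _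
      _ ≤ (‖(exp X - 1 - X) * exp Y‖ + ‖X * (exp Y - 1)‖
          + ‖exp Y - 1 - Y‖) + ‖exp (X + Y) - 1 - (X + Y)‖ :=
          add_le_add norm_add₃_le le_rfl
      _ ≤ (‖X‖ ^ 2 / 2 * M + ‖X‖ * ‖Y‖ * M + ‖Y‖ ^ 2 / 2 * M) + t ^ 2 / 2 * M := by
          exact add_le_add (add_le_add (add_le_add h1 h2) h3) h4
      _ = t ^ 2 * M := by linear_combination (M * (‖X‖ + ‖Y‖ + t) / 2) * hab
  -- telescoping
  have htel := pow_sub_pow_norm T S M hM0 hTm hSm m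
  have hSn : S ^ (m + 1) = exp (A + B) := by
    have hnsmul : ∀ (k : ℕ) (x : 𝔸), exp (k • x) = exp x ^ k := by
      intro k x
      induction k with
      | zero => rw [zero_smul, pow_zero, exp_zero]
      | succ k ih =>
        rw [succ_nsmul, pow_succ, exp_add_of_commute_of_mem_ball (𝕂 := ℂ) ((Commute.refl x).smul_left k)
          (by rw [expSeries_radius_eq_top]; exact Metric.mem_eball.2 (edist_lt_top _ _))
          (by rw [expSeries_radius_eq_top]; exact Metric.mem_eball.2 (edist_lt_top _ _)), ih]
    rw [hSdef, ← hnsmul]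
    congr 1
    rw [hXdef, hYdef, ← smul_add, ← Nat.cast_smul_eq_nsmul ℂ, smul_smul,
      mul_inv_cancel₀ hnc, one_smul]
  have hnt : ((m + 1 : ℕ) : ℝ) * t = r := by
    rw [htdef]; field_simp
  calc ‖T ^ (m + 1) - exp (A + B)‖ = ‖T ^ (m + 1) - S ^ (m + 1)‖ := by rw [hSn]
    _ ≤ ((m + 1 : ℕ) : ℝ) * M ^ m * ‖T - S‖ := by exact_mod_cast htel
    _ ≤ ((m + 1 : ℕ) : ℝ) * M ^ m * (t ^ 2 * M) := by
        refine mul_le_mul_of_nonneg_left hD ?_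
        positivity
    _ = ((m + 1 : ℕ) : ℝ) * t ^ 2 * (M ^ m * M) := by ring
    _ = ((m + 1 : ℕ) : ℝ) * t ^ 2 * Real.exp (2 * r) := by
        rw [hMdef, ← pow_succ, ← Real.exp_nat_mul]
        have : ((m + 1 : ℕ) : ℝ) * (2 * t) = 2 * r := by
          rw [← hnt]; ring
        rw [this]
    _ = r ^ 2 * Real.exp (2 * r) / ((m + 1 : ℕ) : ℝ) := by
        rw [← hnt]
        field_simp
end

section
/- Let A_1, …, A_L be elements of a complex Banach algebra, let s = Σ_{ℓ=1}^{L} ‖A_ℓ‖, and let n ≥ 1. Then ‖(exp(A_1/n) · exp(A_2/n) ⋯ exp(A_L/n))^n − exp(A_1 + A_2 + ⋯ + A_L)‖ ≤ s² · exp(2s) / n. In particular, if each ‖A_ℓ‖ ≤ c for a fixed constant c, the error is bounded by c² L² exp(2cL)/n, i.e., it is L² · O(1/n). -/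
open NormedSpace Nat

section Aux

variable {𝔸 : Type*} [NormedRing 𝔸] [NormedAlgebra ℂ 𝔸] [CompleteSpace 𝔸]

lemma norm_add4 {E : Type*} [SeminormedAddGroup E] (a b c d : E) :
    ‖a + b + c + d‖ ≤ ‖a‖ + ‖b‖ + ‖c‖ + ‖d‖ := by
  calc ‖a + b + c + d‖ ≤ ‖a + b + c‖ + ‖d‖ := norm_add_le _ _
    _ ≤ ‖a + b‖ + ‖c‖ + ‖d‖ := by gcongr; exact norm_add_le _ _
    _ ≤ ‖a‖ + ‖b‖ + ‖c‖ + ‖d‖ := by gcongr; exact norm_add_le _ _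

lemma exp_remainder_hasSum (x : 𝔸) :
    HasSum (fun k : ℕ => ((k + 2)!⁻¹ : ℂ) • x ^ (k + 2)) (exp x - 1 - x) := by
  have h := exp_series_hasSum_exp' (𝕂 := ℂ) x
  have h2 := (hasSum_nat_add_iff' (f := fun k : ℕ => (k !⁻¹ : ℂ) • x ^ k) 2).mpr h
  simpa [Finset.sum_range_succ, sub_sub] using h2

lemma exp_remainder_hasSum_real (t : ℝ) :
    HasSum (fun k : ℕ => t ^ (k + 2) / (k + 2)!) (Real.exp t - 1 - t) := by
  have h := expSeries_div_hasSum_exp t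
  rw [← Real.exp_eq_exp_ℝ] at h
  have h2 := (hasSum_nat_add_iff' (f := fun k : ℕ => t ^ k / k !) 2).mpr h
  simpa [Finset.sum_range_succ, sub_sub] using h2

lemma norm_exp_sub_one_sub (x : 𝔸) :
    ‖exp x - 1 - x‖ ≤ Real.exp ‖x‖ - 1 - ‖x‖ := by
  refine (exp_remainder_hasSum x).norm_le_of_bounded (exp_remainder_hasSum_real ‖x‖)
    fun k => ?_
  rw [norm_smul, norm_inv, Complex.norm_natCast, div_eq_inv_mul]
  exact mul_le_mul_of_nonneg_left (norm_pow_le' x (by omega)) (by positivity)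

lemma norm_exp_sub_one (x : 𝔸) : ‖exp x - 1‖ ≤ Real.exp ‖x‖ - 1 := by
  have h := norm_exp_sub_one_sub x
  have h2 : ‖exp x - 1‖ ≤ ‖exp x - 1 - x‖ + ‖x‖ := by
    calc ‖exp x - 1‖ = ‖exp x - 1 - x + x‖ := by congr 1; abel
    _ ≤ _ := norm_add_le _ _
  linarith

lemma exp_sub_one_sub_mono {a b : ℝ} (ha : 0 ≤ a) (hab : a ≤ b) :
    Real.exp a - 1 - a ≤ Real.exp b - 1 - b := by
  have h1 : Real.exp b = Real.exp a * Real.exp (b - a) := by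
    rw [← Real.exp_add]; ring_nf
  have h2 := Real.add_one_le_exp (b - a)
  have h3 := Real.one_le_exp ha
  nlinarith [Real.exp_pos a]

lemma exp_sub_one_sub_le_sq (t : ℝ) (ht : 0 ≤ t) :
    Real.exp t - 1 - t ≤ t ^ 2 / 2 * Real.exp t := by
  have hb : HasSum (fun k : ℕ => t ^ 2 / 2 * (t ^ k / k !)) (t ^ 2 / 2 * Real.exp t) := by
    have h := expSeries_div_hasSum_exp t
    rw [← Real.exp_eq_exp_ℝ] at h
    exact h.mul_left _
  refine hasSum_le (fun k => ?_) (exp_remainder_hasSum_real t) hb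
  have hfact : 2 * k ! ≤ (k + 2)! := by
    rw [Nat.factorial_succ, Nat.factorial_succ]
    exact Nat.mul_le_mul (by omega) (Nat.le_mul_of_pos_left _ (by omega))
  have hk0 : (0:ℝ) < (k ! : ℝ) := by exact_mod_cast Nat.factorial_pos k
  calc t ^ (k + 2) / ((k + 2)! : ℝ) = t ^ 2 * t ^ k / ((k + 2)! : ℝ) := by
        rw [pow_add]; ring
    _ ≤ t ^ 2 * t ^ k / ((2 * k ! : ℕ) : ℝ) := by gcongr
    _ = t ^ 2 / 2 * (t ^ k / k !) := by
        push_cast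
        field_simp

lemma list_norm_sum_le (l : List 𝔸) : ‖l.sum‖ ≤ (l.map norm).sum := by
  induction l with
  | nil => simp
  | cons x tl ih =>
    simp only [List.sum_cons, List.map_cons]
    exact le_trans (norm_add_le _ _) (by linarith)

lemma list_norm_sum_nonneg (l : List 𝔸) : 0 ≤ (l.map norm).sum :=
  List.sum_nonneg (by rintro y hy; rcases List.mem_map.mp hy with ⟨z, -, rfl⟩; positivity)

lemma norm_list_prod_exp_sub (l : List 𝔸) :
    ‖(l.map (exp)).prod - 1 - l.sum‖ ≤
      Real.exp ((l.map norm).sum) - 1 - (l.map norm).sum := by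
  induction l with
  | nil => simp
  | cons x tl ih =>
    simp only [List.map_cons, List.prod_cons, List.sum_cons]
    set P := (tl.map (exp)).prod with hP
    set S := tl.sum with hS
    set σ := (tl.map norm).sum with hσ
    set a := ‖x‖ with ha
    have hσ0 : 0 ≤ σ := list_norm_sum_nonneg tl
    have ha0 : 0 ≤ a := norm_nonneg x
    have hSσ : ‖S‖ ≤ σ := list_norm_sum_le tl
    have hP1 : ‖P - 1‖ ≤ Real.exp σ - 1 := by
      have h : ‖P - 1‖ ≤ ‖P - 1 - S‖ + ‖S‖ := by
        calc ‖P - 1‖ = ‖P - 1 - S + S‖ := by congr 1; abel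
        _ ≤ _ := norm_add_le _ _
      linarith [ih]
    have key : exp x * P - 1 - (x + S) =
        (exp x - 1 - x) * (P - 1) + (exp x - 1 - x) + x * (P - 1) + (P - 1 - S) := by
      noncomm_ring
    rw [key]
    have hE := norm_exp_sub_one_sub x
    have hexp : Real.exp (a + σ) = Real.exp a * Real.exp σ := Real.exp_add a σ
    have hEpos : 0 ≤ Real.exp a - 1 - a := by
      have := Real.add_one_le_exp a; linarith
    have hσ1 : (0:ℝ) ≤ Real.exp σ - 1 := by linarith [Real.one_le_exp hσ0]
    have t1 : ‖(exp x - 1 - x) * (P - 1)‖ ≤ (Real.exp a - 1 - a) * (Real.exp σ - 1) :=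
      le_trans (norm_mul_le _ _) (mul_le_mul hE hP1 (norm_nonneg _) hEpos)
    have t2 : ‖x * (P - 1)‖ ≤ a * (Real.exp σ - 1) :=
      le_trans (norm_mul_le _ _) (mul_le_mul le_rfl hP1 (norm_nonneg _) ha0)
    calc ‖(exp x - 1 - x) * (P - 1) + (exp x - 1 - x) + x * (P - 1) + (P - 1 - S)‖
        ≤ ‖(exp x - 1 - x) * (P - 1)‖ + ‖exp x - 1 - x‖ + ‖x * (P - 1)‖ + ‖P - 1 - S‖ :=
          norm_add4 _ _ _ _
      _ ≤ (Real.exp a - 1 - a) * (Real.exp σ - 1) + (Real.exp a - 1 - a) +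
            a * (Real.exp σ - 1) + (Real.exp σ - 1 - σ) := by
          exact add_le_add (add_le_add (add_le_add t1 hE) t2) ih
      _ = Real.exp (a + σ) - 1 - (a + σ) := by rw [hexp]; ring

lemma norm_pow_sub_one {x : 𝔸} {u : ℝ} (hu : 0 ≤ u) (hx : ‖x - 1‖ ≤ Real.exp u - 1) :
    ∀ k : ℕ, ‖x ^ k - 1‖ ≤ Real.exp (k * u) - 1 := by
  intro k
  induction k with
  | zero => simp
  | succ k ih =>
    have key : x ^ (k + 1) - 1 = (x ^ k - 1) * (x - 1) + (x ^ k - 1) + (x - 1) := by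
      noncomm_ring
    rw [key]
    have h1 : Real.exp ((k + 1 : ℕ) * u) = Real.exp u * Real.exp (k * u) := by
      rw [← Real.exp_add]; push_cast; ring_nf
    have h2 : (0:ℝ) ≤ Real.exp u - 1 := by linarith [Real.one_le_exp hu]
    have h3 : (0:ℝ) ≤ Real.exp ((k:ℝ) * u) - 1 := by
      have h4 : (0:ℝ) ≤ (k:ℝ) * u := by positivity
      linarith [Real.one_le_exp h4]
    have t1 : ‖(x ^ k - 1) * (x - 1)‖ ≤ (Real.exp (k * u) - 1) * (Real.exp u - 1) :=
      le_trans (norm_mul_le _ _) (mul_le_mul ih hx (norm_nonneg _) h3)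
    calc ‖(x ^ k - 1) * (x - 1) + (x ^ k - 1) + (x - 1)‖
        ≤ ‖(x ^ k - 1) * (x - 1)‖ + ‖x ^ k - 1‖ + ‖x - 1‖ := norm_add₃_le
      _ ≤ (Real.exp (k * u) - 1) * (Real.exp u - 1) + (Real.exp (k * u) - 1) +
            (Real.exp u - 1) := add_le_add (add_le_add t1 ih) hx
      _ = Real.exp ((k + 1 : ℕ) * u) - 1 := by rw [h1]; ring

lemma norm_pow_sub_pow' {x y : 𝔸} {u : ℝ} (hu : 0 ≤ u)
    (hx : ‖x - 1‖ ≤ Real.exp u - 1) (hy : ‖y - 1‖ ≤ Real.exp u - 1) :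
    ∀ k : ℕ, ‖x ^ k - y ^ k‖ ≤ k * Real.exp (k * u) * ‖x - y‖ := by
  intro k
  induction k with
  | zero => simp
  | succ k ih =>
    have key : x ^ (k + 1) - y ^ (k + 1) =
        (x ^ k - y ^ k) * (x - 1) + (x ^ k - y ^ k) + (y ^ k - 1) * (x - y) + (x - y) := by
      noncomm_ring
    rw [key]
    have hyk := norm_pow_sub_one hu hy k
    have h2 : (0:ℝ) ≤ Real.exp u - 1 := by linarith [Real.one_le_exp hu]
    have h3 : (0:ℝ) ≤ Real.exp ((k:ℝ) * u) - 1 := by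
      have h4 : (0:ℝ) ≤ (k:ℝ) * u := by positivity
      linarith [Real.one_le_exp h4]
    have hd : (0:ℝ) ≤ ‖x - y‖ := norm_nonneg _
    have hexp : Real.exp ((k + 1 : ℕ) * u) = Real.exp u * Real.exp (k * u) := by
      rw [← Real.exp_add]; push_cast; ring_nf
    have t1 : ‖(x ^ k - y ^ k) * (x - 1)‖ ≤
        (k * Real.exp (k * u) * ‖x - y‖) * (Real.exp u - 1) :=
      le_trans (norm_mul_le _ _) (mul_le_mul ih hx (norm_nonneg _) (by positivity))
    have t2 : ‖(y ^ k - 1) * (x - y)‖ ≤ (Real.exp (k * u) - 1) * ‖x - y‖ :=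
      le_trans (norm_mul_le _ _) (mul_le_mul hyk le_rfl hd h3)
    calc ‖(x ^ k - y ^ k) * (x - 1) + (x ^ k - y ^ k) + (y ^ k - 1) * (x - y) + (x - y)‖
        ≤ ‖(x ^ k - y ^ k) * (x - 1)‖ + ‖x ^ k - y ^ k‖ + ‖(y ^ k - 1) * (x - y)‖ +
            ‖x - y‖ := norm_add4 _ _ _ _
      _ ≤ (k * Real.exp (k * u) * ‖x - y‖) * (Real.exp u - 1) +
            k * Real.exp (k * u) * ‖x - y‖ + (Real.exp (k * u) - 1) * ‖x - y‖ + ‖x - y‖ :=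
          add_le_add (add_le_add (add_le_add t1 ih) t2) le_rfl
      _ = Real.exp u * Real.exp (k * u) * k * ‖x - y‖ + Real.exp (k * u) * ‖x - y‖ := by ring
      _ ≤ (k + 1 : ℕ) * Real.exp ((k + 1 : ℕ) * u) * ‖x - y‖ := by
          rw [hexp]
          push_cast
          have h5 : 0 ≤ Real.exp ((k:ℝ) * u) * ‖x - y‖ * (Real.exp u - 1) :=
            mul_nonneg (mul_nonneg (Real.exp_pos _).le hd) h2
          nlinarith [h5]

end Aux

/-- **Trotter bound for `L` terms.** For elements `A 1, …, A L` of a complex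
Banach algebra, with `s = ∑ ℓ, ‖A ℓ‖` and `n ≥ 1`,
`‖(exp(A 1/n) ⋯ exp(A L/n))^n − exp (∑ ℓ, A ℓ)‖ ≤ s² · exp(2s) / n`;
in particular if each `‖A ℓ‖ ≤ c` the error is `≤ c²L²exp(2cL)/n`, i.e.
`L² · O(1/n)`. -/
theorem trotter_error_bound_multi {𝔸 : Type*} [NormedRing 𝔸] [NormedAlgebra ℂ 𝔸]
    [CompleteSpace 𝔸] (L : ℕ) (A : Fin L → 𝔸) (s : ℝ) (hs : s = ∑ ℓ, ‖A ℓ‖)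
    (n : ℕ) (hn : 1 ≤ n) :
    ‖(List.ofFn fun ℓ => exp ((n : ℂ)⁻¹ • A ℓ)).prod ^ n - exp (∑ ℓ, A ℓ)‖ ≤
      s ^ 2 * Real.exp (2 * s) / n := by
  have hn0 : (n : ℝ) ≠ 0 := by positivity
  have hn1 : (1:ℝ) ≤ (n : ℝ) := by exact_mod_cast hn
  have hs0 : 0 ≤ s := by rw [hs]; positivity
  set l : List 𝔸 := List.ofFn (fun ℓ => (n : ℂ)⁻¹ • A ℓ) with hl
  set t : ℝ := (n : ℝ)⁻¹ * s with htdef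
  have ht0 : 0 ≤ t := by positivity
  have hts : t ≤ s := by
    rw [htdef]
    calc (n:ℝ)⁻¹ * s ≤ 1 * s := by
          apply mul_le_mul_of_nonneg_right _ hs0
          rw [inv_le_one_iff₀]; right; exact hn1
    _ = s := one_mul s
  have hnt : (n : ℝ) * t = s := by rw [htdef]; field_simp
  have hmap : (List.ofFn fun ℓ => exp ((n : ℂ)⁻¹ • A ℓ)) = l.map (exp) := by
    rw [hl, List.map_ofFn]; rfl
  set S : 𝔸 := (n : ℂ)⁻¹ • ∑ ℓ, A ℓ with hSdef
  have hlsum : l.sum = S := by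
    rw [hl, List.sum_ofFn, hSdef, Finset.smul_sum]
  have hlnorm : (l.map norm).sum = t := by
    rw [hl, List.map_ofFn, List.sum_ofFn, htdef, hs, Finset.mul_sum]
    congr 1
    ext ℓ
    simp [norm_smul]
  set P : 𝔸 := (l.map (exp)).prod with hPdef
  set Q : 𝔸 := exp S with hQdef
  have hQn : Q ^ n = exp (∑ ℓ, A ℓ) := by
    letI : NormedAlgebra ℚ 𝔸 := NormedAlgebra.restrictScalars ℚ ℂ 𝔸
    rw [hQdef, ← exp_nsmul]
    congr 1
    rw [hSdef, ← Nat.cast_smul_eq_nsmul ℂ, smul_smul,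
      mul_inv_cancel₀ (by exact_mod_cast hn0 : (n:ℂ) ≠ 0), one_smul]
  have hP1S : ‖P - 1 - S‖ ≤ Real.exp t - 1 - t := by
    have h := norm_list_prod_exp_sub l
    rwa [hlsum, hlnorm, ← hPdef] at h
  have hSt : ‖S‖ ≤ t := by
    rw [hSdef, htdef, norm_smul]
    have h1 : ‖((n:ℂ))⁻¹‖ = ((n:ℝ))⁻¹ := by simp
    rw [h1]
    apply mul_le_mul_of_nonneg_left _ (by positivity)
    rw [hs]; exact norm_sum_le _ _
  have hQ1S : ‖Q - 1 - S‖ ≤ Real.exp t - 1 - t :=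
    le_trans (norm_exp_sub_one_sub S) (exp_sub_one_sub_mono (norm_nonneg S) hSt)
  have hPQ : ‖P - Q‖ ≤ t ^ 2 * Real.exp t := by
    have h1 : ‖P - Q‖ ≤ ‖P - 1 - S‖ + ‖Q - 1 - S‖ := by
      calc ‖P - Q‖ = ‖(P - 1 - S) - (Q - 1 - S)‖ := by congr 1; abel
      _ ≤ _ := norm_sub_le _ _
    have h2 := exp_sub_one_sub_le_sq t ht0
    linarith
  have hP1 : ‖P - 1‖ ≤ Real.exp t - 1 := by
    have h : ‖P - 1‖ ≤ ‖P - 1 - S‖ + ‖S‖ := by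
      calc ‖P - 1‖ = ‖P - 1 - S + S‖ := by congr 1; abel
      _ ≤ _ := norm_add_le _ _
    linarith
  have hQ1 : ‖Q - 1‖ ≤ Real.exp t - 1 := by
    have h := norm_exp_sub_one S
    have h2 : Real.exp ‖S‖ ≤ Real.exp t := Real.exp_le_exp.mpr hSt
    linarith
  have hfin := norm_pow_sub_pow' ht0 hP1 hQ1 n
  rw [hmap, ← hQn]
  calc ‖P ^ n - Q ^ n‖ ≤ n * Real.exp (n * t) * ‖P - Q‖ := hfin
    _ ≤ n * Real.exp (n * t) * (t ^ 2 * Real.exp t) := by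
        apply mul_le_mul_of_nonneg_left hPQ (by positivity)
    _ = (n * t ^ 2) * (Real.exp (n * t) * Real.exp t) := by ring
    _ = (s ^ 2 / n) * Real.exp (s + t) := by
        rw [← Real.exp_add, hnt]
        congr 1
        rw [htdef]
        field_simp
    _ ≤ (s ^ 2 / n) * Real.exp (2 * s) := by
        apply mul_le_mul_of_nonneg_left _ (by positivity)
        exact Real.exp_le_exp.mpr (by linarith)
    _ = s ^ 2 * Real.exp (2 * s) / n := by ring
end
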